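/- Let 1 ≤ p < ∞ and let T be a positive bounded linear operator on the real Banach space ℓ^p, i.e. if x_i ≥ 0 for all i then (T x)_i ≥ 0 for all i. If T is quasinilpotent (its spectral radius is 0), then T has a nontrivial closed invariant subspace; in fact, it has a nontrivial closed invariant ideal. -/

import Mathlib

open Filter Topology ENNReal

namespace PQIaux

variable {p : ℝ≥0∞} [Fact (1 ≤ p)]

lemma hp0 : p ≠ 0 := (zero_lt_one.trans_le (Fact.out : 1 ≤ p)).ne'

/-- the standard basis vector -/
noncomputable def e (p : ℝ≥0∞) (j : ℕ) : lp (fun _ : ℕ => ℝ) p := lp.single p j 1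

lemma e_apply_self (j : ℕ) : e p j j = 1 := lp.single_apply_self p j 1

lemma e_apply_ne {j k : ℕ} (h : k ≠ j) : e p j k = 0 := lp.single_apply_ne p j 1 h

lemma e_nonneg (j k : ℕ) : 0 ≤ e p j k := by
  rcases eq_or_ne k j with rfl | h
  · rw [e_apply_self]; norm_num
  · rw [e_apply_ne h]

lemma single_eq_smul (j : ℕ) (a : ℝ) : lp.single p j a = a • e p j := by
  rw [e, ← lp.single_smul, smul_eq_mul, mul_one]

/-- evaluation at a coordinate is continuous on `lp` -/
lemma eval_continuous (i : ℕ) : Continuous fun x : lp (fun _ : ℕ => ℝ) p => x i := by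
  have : LipschitzWith 1 (fun x : lp (fun _ : ℕ => ℝ) p => x i) := by
    apply LipschitzWith.of_dist_le_mul
    intro x y
    rw [NNReal.coe_one, one_mul, dist_eq_norm, dist_eq_norm]
    have h : x i - y i = (x - y) i := by simp [lp.coeFn_sub]
    rw [h]
    exact lp.norm_apply_le_norm hp0 (x - y) i
  exact this.continuous

/-- evaluation as a linear map -/
noncomputable def evalL (p : ℝ≥0∞) [Fact (1 ≤ p)] (i : ℕ) :
    lp (fun _ : ℕ => ℝ) p →L[ℝ] ℝ where
  toFun x := x i
  map_add' x y := by simp [lp.coeFn_add]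
  map_smul' c x := by simp [lp.coeFn_smul]
  cont := eval_continuous i

/-- the closed ideal of sequences supported in `S` -/
noncomputable def JS (p : ℝ≥0∞) [Fact (1 ≤ p)] (S : Set ℕ) :
    Submodule ℝ (lp (fun _ : ℕ => ℝ) p) where
  carrier := {x | ∀ i ∉ S, x i = 0}
  add_mem' {x y} hx hy i hi := by simp [lp.coeFn_add, hx i hi, hy i hi]
  zero_mem' i _ := by simp [lp.coeFn_zero]
  smul_mem' c x hx i hi := by simp [lp.coeFn_smul, hx i hi]

lemma JS_closed (S : Set ℕ) : IsClosed ((JS p S : Set (lp (fun _ : ℕ => ℝ) p))) := by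
  have : (JS p S : Set (lp (fun _ : ℕ => ℝ) p)) =
      ⋂ i ∈ Sᶜ, {x : lp (fun _ : ℕ => ℝ) p | x i = 0} := by
    ext x
    simp only [Set.mem_iInter, Set.mem_setOf_eq, Set.mem_compl_iff]
    rfl
  rw [this]
  exact isClosed_biInter fun i _ => isClosed_eq (eval_continuous i) continuous_const

lemma e_mem_JS {S : Set ℕ} {j : ℕ} (hj : j ∈ S) : e p j ∈ JS p S :=
  fun i hi => e_apply_ne (by rintro rfl; exact hi hj)

lemma JS_ne_bot {S : Set ℕ} {j : ℕ} (hj : j ∈ S) : JS p S ≠ ⊥ := by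
  intro h
  have h1 : e p j ∈ JS p S := e_mem_JS hj
  rw [h, Submodule.mem_bot] at h1
  have := e_apply_self (p := p) j
  rw [h1] at this
  simp [lp.coeFn_zero] at this

lemma JS_ne_top {S : Set ℕ} {k : ℕ} (hk : k ∉ S) : JS p S ≠ ⊤ := by
  intro h
  have h1 : e p k ∈ JS p S := h.symm ▸ Submodule.mem_top
  have := h1 k hk
  rw [e_apply_self] at this
  norm_num at this

section withT

variable (T : lp (fun _ : ℕ => ℝ) p →L[ℝ] lp (fun _ : ℕ => ℝ) p)
variable (hpos : ∀ x : lp (fun _ : ℕ => ℝ) p, (∀ i, 0 ≤ x i) → ∀ i, 0 ≤ T x i)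

omit hpos in
lemma pow_add_apply (a b : ℕ) (x : lp (fun _ : ℕ => ℝ) p) :
    (T ^ (a + b)) x = (T ^ a) ((T ^ b) x) := by rw [pow_add]; rfl

include hpos

lemma Tmono {x y : lp (fun _ : ℕ => ℝ) p} (h : ∀ i, x i ≤ y i) : ∀ i, T x i ≤ T y i := by
  intro i
  have h0 : ∀ j, 0 ≤ (y - x) j := by
    intro j
    have : (y - x) j = y j - x j := by simp [lp.coeFn_sub]
    rw [this]
    linarith [h j]
  have := hpos (y - x) h0 i
  have hsub : T (y - x) i = T y i - T x i := by
    rw [map_sub]; simp [lp.coeFn_sub]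
  linarith [hsub ▸ this]

lemma Tpow_pos (n : ℕ) {x : lp (fun _ : ℕ => ℝ) p} (h : ∀ i, 0 ≤ x i) :
    ∀ i, 0 ≤ (T ^ n) x i := by
  induction n generalizing x with
  | zero => intro i; simpa using h i
  | succ n ih =>
    intro i
    rw [pow_succ, ContinuousLinearMap.mul_apply]
    exact ih (fun j => hpos x h j) i

lemma Tpow_mono (n : ℕ) {x y : lp (fun _ : ℕ => ℝ) p} (h : ∀ i, x i ≤ y i) :
    ∀ i, (T ^ n) x i ≤ (T ^ n) y i := by
  intro i
  have h0 : ∀ j, 0 ≤ (y - x) j := by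
    intro j
    have : (y - x) j = y j - x j := by simp [lp.coeFn_sub]
    rw [this]; linarith [h j]
  have := Tpow_pos T hpos n h0 i
  have hsub : (T ^ n) (y - x) i = (T ^ n) y i - (T ^ n) x i := by
    rw [map_sub]; simp [lp.coeFn_sub]
  linarith [hsub ▸ this]

/-- key step inequality: `x j * (T (e j)) k ≤ (T x) k` for nonnegative `x` -/
lemma step {x : lp (fun _ : ℕ => ℝ) p} (hx : ∀ i, 0 ≤ x i) (j k : ℕ) :
    x j * T (e p j) k ≤ T x k := by
  have hle : ∀ i, ((x j) • e p j) i ≤ x i := by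
    intro i
    have : ((x j) • e p j) i = x j * e p j i := by simp [lp.coeFn_smul]
    rw [this]
    rcases eq_or_ne i j with rfl | h
    · rw [e_apply_self, mul_one]
    · rw [e_apply_ne h, mul_zero]; exact hx i
  have := Tmono T hpos hle k
  have hsm : T ((x j) • e p j) k = x j * T (e p j) k := by
    rw [map_smul]; simp [lp.coeFn_smul]
  linarith [hsm ▸ this]

end withT

end PQIaux

open PQIaux

/-- Every positive quasinilpotent bounded operator on `ℓᵖ` (`1 ≤ p < ∞`) has a
nontrivial closed invariant subspace, in fact a nontrivial closed invariant ideal. -/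
theorem positive_quasinilpotent_invariant_ideal
    (p : ℝ≥0∞) [Fact (1 ≤ p)] (hp : p ≠ ∞)
    (T : lp (fun _ : ℕ => ℝ) p →L[ℝ] lp (fun _ : ℕ => ℝ) p)
    (hpos : ∀ x : lp (fun _ : ℕ => ℝ) p, (∀ i, 0 ≤ x i) → ∀ i, 0 ≤ T x i)
    (hq : Tendsto (fun n : ℕ => ‖T ^ n‖ ^ (1 / (n : ℝ))) atTop (nhds 0)) :
    ∃ J : Submodule ℝ (lp (fun _ : ℕ => ℝ) p),
      IsClosed (J : Set (lp (fun _ : ℕ => ℝ) p)) ∧ J ≠ ⊥ ∧ J ≠ ⊤ ∧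
      (∀ x ∈ J, T x ∈ J) ∧
      (∀ x ∈ J, ∀ y : lp (fun _ : ℕ => ℝ) p, (∀ i, |y i| ≤ |x i|) → y ∈ J) := by
  classical
  set E := lp (fun _ : ℕ => ℝ) p
  -- the reachability set from index 0
  set S' : Set ℕ := {j | ∃ n : ℕ, 0 < (T ^ (n + 1)) (e p 0) j} with hS'def
  have he0 : ∀ i, 0 ≤ e p 0 i := e_nonneg 0
  have hpowpos : ∀ n i, 0 ≤ (T ^ n) (e p 0) i := fun n => Tpow_pos T hpos n he0
  -- transitivity of reachability
  have htrans : ∀ j ∈ S', ∀ k : ℕ, 0 < T (e p j) k → k ∈ S' := by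
    rintro j ⟨n, hn⟩ k hk
    refine ⟨n + 1, ?_⟩
    have hstep := step T hpos (x := (T ^ (n + 1)) (e p 0)) (hpowpos (n + 1)) j k
    have hTT : T ((T ^ (n + 1)) (e p 0)) = (T ^ (n + 2)) (e p 0) := by
      rw [show n + 2 = 1 + (n + 1) by ring, pow_add_apply T 1 (n + 1), pow_one]
    rw [hTT] at hstep
    calc (0:ℝ) < (T ^ (n + 1)) (e p 0) j * T (e p j) k := mul_pos hn hk
      _ ≤ (T ^ (n + 2)) (e p 0) k := hstep
  -- the diagonal: 0 is not reachable from itself (quasinilpotence)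
  have hdiag : (0 : ℕ) ∉ S' := by
    rintro ⟨n, hn⟩
    set c : ℝ := min ((T ^ (n + 1)) (e p 0) 0) 1 with hcdef
    have hc0 : 0 < c := lt_min hn zero_lt_one
    have hc1 : c ≤ 1 := min_le_right _ _
    have hptoReal : 0 < p.toReal :=
      ENNReal.toReal_pos (zero_lt_one.trans_le (Fact.out : 1 ≤ p)).ne' hp
    have hnorme0 : ‖e p 0‖ = 1 := by
      have := lp.norm_single (p := p) (zero_lt_one.trans_le (Fact.out : 1 ≤ p)) (E := fun _ : ℕ => ℝ) (0 : ℕ) (1 : ℝ)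
      simpa [e] using this
    -- by induction : c ^ k ≤ (T ^ (k * (n+1))) e0 0
    have hiter : ∀ k : ℕ, c ^ k ≤ (T ^ (k * (n + 1))) (e p 0) 0 := by
      intro k
      induction k with
      | zero => simp [e_apply_self]
      | succ k ih =>
        have hle : ∀ i, (c ^ k • e p 0) i ≤ (T ^ (k * (n + 1))) (e p 0) i := by
          intro i
          have hsm : (c ^ k • e p 0) i = c ^ k * e p 0 i := by simp [lp.coeFn_smul]
          rw [hsm]
          rcases eq_or_ne i 0 with rfl | h
          · rw [e_apply_self, mul_one]; exact ih
          · rw [e_apply_ne h, mul_zero]; exact hpowpos _ i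
        have hmono := Tpow_mono T hpos (n + 1) hle 0
        have hsm : (T ^ (n + 1)) (c ^ k • e p 0) 0 = c ^ k * (T ^ (n + 1)) (e p 0) 0 := by
          rw [map_smul]; simp [lp.coeFn_smul]
        have hcomp : (T ^ (n + 1)) ((T ^ (k * (n + 1))) (e p 0)) =
            (T ^ ((k + 1) * (n + 1))) (e p 0) := by
          rw [show (k + 1) * (n + 1) = (n + 1) + k * (n + 1) by ring, pow_add_apply T (n + 1) (k * (n + 1))]
        rw [hcomp] at hmono
        rw [hsm] at hmono
        have hcc : c ^ (k + 1) ≤ c ^ k * (T ^ (n + 1)) (e p 0) 0 := by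
          rw [pow_succ]
          exact mul_le_mul_of_nonneg_left (min_le_left _ _) (pow_nonneg hc0.le k)
        linarith
    -- hence ‖T ^ (k*(n+1))‖ ≥ c ^ k
    have hnormge : ∀ k : ℕ, c ^ k ≤ ‖T ^ (k * (n + 1))‖ := by
      intro k
      have h1 : (T ^ (k * (n + 1))) (e p 0) 0 ≤ ‖(T ^ (k * (n + 1))) (e p 0)‖ := by
        calc (T ^ (k * (n + 1))) (e p 0) 0 ≤ |(T ^ (k * (n + 1))) (e p 0) 0| := le_abs_self _
          _ = ‖(T ^ (k * (n + 1))) (e p 0) 0‖ := (Real.norm_eq_abs _).symm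
          _ ≤ ‖(T ^ (k * (n + 1))) (e p 0)‖ := lp.norm_apply_le_norm hp0 _ 0
      have h2 : ‖(T ^ (k * (n + 1))) (e p 0)‖ ≤ ‖T ^ (k * (n + 1))‖ := by
        calc ‖(T ^ (k * (n + 1))) (e p 0)‖ ≤ ‖T ^ (k * (n + 1))‖ * ‖e p 0‖ :=
              ContinuousLinearMap.le_opNorm _ _
          _ = ‖T ^ (k * (n + 1))‖ := by rw [hnorme0, mul_one]
      linarith [hiter k]
    -- contradiction with quasinilpotence
    set ε : ℝ := c ^ (1 / ((n : ℝ) + 1)) with hεdef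
    have hε0 : 0 < ε := Real.rpow_pos_of_pos hc0 _
    have hev : ∀ᶠ m : ℕ in atTop, ‖T ^ m‖ ^ (1 / (m : ℝ)) < ε := by
      have := hq (Metric.ball_mem_nhds 0 hε0)
      filter_upwards [this] with m hm
      rw [Set.mem_preimage, Metric.mem_ball, Real.dist_eq, sub_zero] at hm
      calc ‖T ^ m‖ ^ (1 / (m : ℝ)) ≤ |‖T ^ m‖ ^ (1 / (m : ℝ))| := le_abs_self _
        _ < ε := hm
    obtain ⟨N, hN⟩ := hev.exists_forall_of_atTop
    set k : ℕ := N + 1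
    set m : ℕ := k * (n + 1) with hmdef
    have hmN : N ≤ m := by
      calc N ≤ N + 1 := Nat.le_succ N
        _ ≤ (N + 1) * (n + 1) := Nat.le_mul_of_pos_right _ (Nat.succ_pos n)
    have hlt := hN m hmN
    -- but ‖T^m‖^(1/m) ≥ ε
    have hge : ε ≤ ‖T ^ m‖ ^ (1 / (m : ℝ)) := by
      have h1 : (c ^ k : ℝ) ^ (1 / (m : ℝ)) ≤ ‖T ^ m‖ ^ (1 / (m : ℝ)) :=
        Real.rpow_le_rpow (pow_nonneg hc0.le k) (hnormge k) (by positivity)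
      have h2 : (c ^ k : ℝ) ^ (1 / (m : ℝ)) = ε := by
        rw [← Real.rpow_natCast c k, ← Real.rpow_mul hc0.le]
        congr 1
        have hm0 : (m : ℝ) = (k : ℝ) * ((n : ℝ) + 1) := by
          rw [hmdef]; push_cast; ring
        rw [hm0]
        have hk0 : (k : ℝ) ≠ 0 := by positivity
        field_simp
      linarith [h2 ▸ h1]
    linarith
  -- in either case we get a set S with the needed properties
  have main : ∀ S : Set ℕ, (∃ j, j ∈ S) → (∃ k, k ∉ S) →
      (∀ j ∈ S, ∀ k ∉ S, T (e p j) k = 0) →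
      ∃ J : Submodule ℝ (lp (fun _ : ℕ => ℝ) p),
        IsClosed (J : Set (lp (fun _ : ℕ => ℝ) p)) ∧ J ≠ ⊥ ∧ J ≠ ⊤ ∧
        (∀ x ∈ J, T x ∈ J) ∧
        (∀ x ∈ J, ∀ y : lp (fun _ : ℕ => ℝ) p, (∀ i, |y i| ≤ |x i|) → y ∈ J) := by
    rintro S ⟨j0, hj0⟩ ⟨k0, hk0⟩ hS
    refine ⟨JS p S, JS_closed S, JS_ne_bot hj0, JS_ne_top hk0, ?_, ?_⟩
    · -- invariance
      intro x hx k hk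
      have hsum : HasSum (fun j : ℕ => lp.single p j (x j)) x := lp.hasSum_single hp x
      have hsum2 : HasSum (fun j : ℕ => T (lp.single p j (x j)) k) (T x k) := by
        have h1 : HasSum (fun j : ℕ => T (lp.single p j (x j))) (T x) :=
          T.hasSum hsum
        exact (evalL p k).hasSum h1
      have hzero : ∀ j : ℕ, T (lp.single p j (x j)) k = 0 := by
        intro j
        rw [single_eq_smul, map_smul]
        have hsm : ((x j) • T (e p j)) k = x j * T (e p j) k := by simp [lp.coeFn_smul]
        rw [hsm]
        by_cases hjS : j ∈ S
        · rw [hS j hjS k hk, mul_zero]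
        · rw [hx j hjS, zero_mul]
      have : HasSum (fun _ : ℕ => (0:ℝ)) (T x k) := by
        convert hsum2 using 1
        exact funext fun j => (hzero j).symm
      have := this.unique hasSum_zero
      exact this
    · -- ideal property
      intro x hx y hy i hi
      have := hy i
      rw [hx i hi] at this
      simpa using abs_nonpos_iff.mp (by simpa using this)
  by_cases hne : S'.Nonempty
  · obtain ⟨j0, hj0⟩ := hne
    refine main S' ⟨j0, hj0⟩ ⟨0, hdiag⟩ ?_
    intro j hj k hk
    have h0 : 0 ≤ T (e p j) k := hpos _ (e_nonneg j) k
    rcases h0.lt_or_eq with h | h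
    · exact absurd (htrans j hj k h) hk
    · exact h.symm
  · -- S' empty: T e₀ vanishes off {0}; use S = {0}
    refine main {0} ⟨0, rfl⟩ ⟨1, by simp⟩ ?_
    intro j hj k hk
    have hj0 : j = 0 := hj
    subst hj0
    have h0 : 0 ≤ T (e p 0) k := hpos _ (e_nonneg 0) k
    rcases h0.lt_or_eq with h | h
    · exfalso
      apply hne
      exact ⟨k, 0, by simpa [pow_one] using h⟩
    · exact h.symm
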